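/- Let δ > 0 and let a, u₊, u₋ ∈ ℝ satisfy a ≤ u₋, u₋ − a ≤ δ/2, and u₋ − u₊ ≥ δ/2. Then ∫_a^{u₋} (u − u₊)(u − u₋) du ≤ −(δ/12)·(u₋ − a)². -/

import Mathlib

/-- If `a ≤ u₋`, `u₋ − a ≤ δ/2` and `u₋ − u₊ ≥ δ/2`, then
`∫_a^{u₋} (u − u₊)(u − u₋) du ≤ −(δ/12)(u₋ − a)²`. -/
theorem parabola_integral_upper_bound
    (δ a up um : ℝ) (hδ : 0 < δ)
    (h1 : a ≤ um) (h2 : um - a ≤ δ / 2) (h3 : δ / 2 ≤ um - up) :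
    (∫ u in a..um, (u - up) * (u - um)) ≤ -(δ / 12) * (um - a) ^ 2 := by
  have hval : (∫ u in a..um, (u - up) * (u - um))
      = (um - a) ^ 2 * ((um - a) / 3 - (um - up) / 2) := by
    have hderiv : ∀ u ∈ Set.uIcc a um, HasDerivAt
        (fun x : ℝ => x ^ 3 / 3 - (up + um) * x ^ 2 / 2 + up * um * x)
        ((u - up) * (u - um)) u := by
      intro u _
      have : HasDerivAt (fun x : ℝ => x ^ 3 / 3 - (up + um) * x ^ 2 / 2 + up * um * x)
          (3 * u ^ 2 / 3 - (up + um) * (2 * u) / 2 + up * um) u := by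
        have h1 := (hasDerivAt_pow 3 u).div_const 3
        have h2 := (((hasDerivAt_pow 2 u)).const_mul (up + um)).div_const 2
        have h3 := (hasDerivAt_id u).const_mul (up * um)
        exact ((h1.sub h2).add h3).congr_deriv (by simp)
      convert this using 1; ring
    rw [intervalIntegral.integral_eq_sub_of_hasDerivAt hderiv
      (by apply Continuous.intervalIntegrable; continuity)]
    ring
  rw [hval]
  nlinarith [sq_nonneg (um - a), sq_nonneg (um - a), mul_nonneg (sq_nonneg (um - a)) hδ.le]
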